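/- Let g : ℝ → ℝ be differentiable, η = ξ₁₂+ξ₃₄+ξ₅₆ ∈ M(6,ℝ), and define f : ℂ⁶ → ℝ by f(w) = g(‖w‖²)·((i·w) ∙ (η·w)). Let φ ∈ ℝ and (ξ₂,ξ₄,ξ₅,ξ₆) ∈ ℝ⁴\{0}, set r = √(ξ₂²+ξ₄²+ξ₅²+ξ₆²), x = (cosφ, 0, sinφ, 0, 0, 0) ∈ ℝ⁶, ξ = (0,ξ₂,0,ξ₄,ξ₅,ξ₆) ∈ ℝ⁶, and z = cosh(r)·x + i·(sinh(r)/r)·ξ ∈ ℂ⁶. Then f is differentiable at z and its Fréchet derivative at z vanishes on the vector v = i·(−ξ₆·e₅ + ξ₅·e₆): Df(z)[v] = 0 (here ℂ⁶ is viewed as a real vector space). -/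

import Mathlib

open Real Complex Matrix

noncomputable section

/-- The real inner product on `ℂ^m`:
`v ∙ w = ∑ⱼ (Re vⱼ)(Re wⱼ) + (Im vⱼ)(Im wⱼ)`. -/
noncomputable def dotR {m : ℕ} (v w : Fin m → ℂ) : ℝ :=
  ∑ j, ((v j).re * (w j).re + (v j).im * (w j).im)

/-- `ξ_{ij} = E_{ji} − E_{ij}`. -/
def xiMat {m : ℕ} (i j : Fin m) : Matrix (Fin m) (Fin m) ℝ :=
  Matrix.single j i 1 - Matrix.single i j 1

lemma mulvec_eta (w : Fin 6 → ℂ) :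
    (((xiMat 0 1 + xiMat 2 3 + xiMat 4 5 : Matrix (Fin 6) (Fin 6) ℝ).map
      (fun a => (a : ℂ))).mulVec w) = ![-w 1, w 0, -w 3, w 2, -w 5, w 4] := by
  funext j
  fin_cases j <;>
    simp [xiMat, Matrix.mulVec, dotProduct, Fin.sum_univ_six, Matrix.single,
      Matrix.add_apply, Matrix.sub_apply, Matrix.map_apply, Matrix.cons_val_succ] <;>
    (try ring) <;> rfl

lemma dotR_diff2 {m : ℕ} (a b : (Fin m → ℂ) → (Fin m → ℂ))
    (ha : ∀ j, Differentiable ℝ (fun w => a w j)) (hb : ∀ j, Differentiable ℝ (fun w => b w j)) :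
    Differentiable ℝ (fun w : Fin m → ℂ => dotR (a w) (b w)) := by
  unfold dotR
  apply Differentiable.fun_sum
  intro j _
  exact ((Complex.reCLM.differentiable.comp (ha j)).mul
      (Complex.reCLM.differentiable.comp (hb j))).add
    ((Complex.imCLM.differentiable.comp (ha j)).mul
      (Complex.imCLM.differentiable.comp (hb j)))


lemma vec6_four {α : Type*} (a b c d e f : α) : ![a,b,c,d,e,f] 4 = e := rfl
lemma vec6_five {α : Type*} (a b c d e f : α) : ![a,b,c,d,e,f] 5 = f := rfl

/-- The differential of `f(w) = g(‖w‖²)·((i·w) ∙ (η·w))` at `z ∈ Φ(L₂)` vanishes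
on the vector `v = i·(−ξ₆·e₅ + ξ₅·e₆)`, i.e. `(η#_z)₂ ∈ T_z μ_η^{-1}(μ_η(z))`. -/
theorem stmt_10 (g : ℝ → ℝ) (hg : Differentiable ℝ g)
    (η : Matrix (Fin 6) (Fin 6) ℝ) (hη : η = xiMat 0 1 + xiMat 2 3 + xiMat 4 5)
    (f : (Fin 6 → ℂ) → ℝ)
    (hf : f = fun w => g (dotR w w) *
      dotR (fun k => Complex.I * w k) ((η.map (fun a => (a : ℂ))).mulVec w))
    (φ ξ₂ ξ₄ ξ₅ ξ₆ : ℝ) (hξ : ¬(ξ₂ = 0 ∧ ξ₄ = 0 ∧ ξ₅ = 0 ∧ ξ₆ = 0))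
    (r : ℝ) (hr : r = Real.sqrt (ξ₂ ^ 2 + ξ₄ ^ 2 + ξ₅ ^ 2 + ξ₆ ^ 2))
    (x ξ : Fin 6 → ℝ)
    (hx : x = ![Real.cos φ, 0, Real.sin φ, 0, 0, 0])
    (hξv : ξ = ![0, ξ₂, 0, ξ₄, ξ₅, ξ₆])
    (z : Fin 6 → ℂ)
    (hz : z = fun j => ((Real.cosh r * x j : ℝ) : ℂ) +
      Complex.I * ((Real.sinh r / r * ξ j : ℝ) : ℂ))
    (v : Fin 6 → ℂ)
    (hv : v = fun k => Complex.I *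
      (((![0, 0, 0, 0, -ξ₆, ξ₅] : Fin 6 → ℝ) k : ℝ) : ℂ)) :
    DifferentiableAt ℝ f z ∧ fderiv ℝ f z v = 0 := by
  -- differentiability of f
  have hfd : Differentiable ℝ f := by
    rw [hf, hη]
    apply Differentiable.mul
    · exact hg.comp (dotR_diff2 id id (fun j => differentiable_apply j)
        (fun j => differentiable_apply j))
    · simp only [mulvec_eta]
      apply dotR_diff2
      · exact fun j => (differentiable_apply j).const_mul _
      · intro j
        fin_cases j <;>
          simp only [Matrix.cons_val_zero, Matrix.cons_val_one, Matrix.head_cons,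
            Matrix.cons_val_succ] <;>
          first
          | exact (differentiable_apply _).neg
          | exact differentiable_apply _
  refine ⟨hfd z, ?_⟩
  set C : ℝ := dotR (fun k => Complex.I * z k) ![-z 1, z 0, -z 3, z 2, -z 5, z 4] with hC
  -- f along the line z + t • v
  have key : (f ∘ fun t : ℝ => z + t • v) =
      fun t : ℝ => g (dotR z z + t ^ 2 * (ξ₅ ^ 2 + ξ₆ ^ 2)) * C := by
    funext t
    simp only [Function.comp, hf, hη, mulvec_eta]
    have e1 : dotR (z + t • v) (z + t • v) = dotR z z + t ^ 2 * (ξ₅ ^ 2 + ξ₆ ^ 2) := by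
      simp [dotR, Fin.sum_univ_six, hz, hv, hx, hξv, Pi.add_apply, Pi.smul_apply,
        Complex.real_smul, Complex.add_re, Complex.add_im, Complex.mul_re, Complex.mul_im,
        Complex.I_re, Complex.I_im, Complex.ofReal_re, Complex.ofReal_im, vec6_four, vec6_five]
      ring
    have e2 : dotR (fun k => Complex.I * (z + t • v) k)
        ![-(z + t • v) 1, (z + t • v) 0, -(z + t • v) 3, (z + t • v) 2,
          -(z + t • v) 5, (z + t • v) 4] = C := by
      simp [dotR, hC, Fin.sum_univ_six, hz, hv, hx, hξv, Pi.add_apply, Pi.smul_apply,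
        Complex.real_smul, Complex.add_re, Complex.add_im, Complex.mul_re, Complex.mul_im,
        Complex.I_re, Complex.I_im, Complex.ofReal_re, Complex.ofReal_im, Complex.neg_re,
        Complex.neg_im, vec6_four, vec6_five]
      try ring
    rw [e1, e2]
  -- derivative of f along the line at 0 is (fderiv f z) v
  have hL : HasDerivAt (fun t : ℝ => z + t • v) v 0 := by
    simpa using ((hasDerivAt_id (0 : ℝ)).smul_const v).const_add z
  have h1 : HasDerivAt (f ∘ fun t : ℝ => z + t • v) (fderiv ℝ f z v) 0 := by
    have hdz : DifferentiableAt ℝ f (z + (0 : ℝ) • v) := by simpa using hfd z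
    have := hdz.hasFDerivAt.comp_hasDerivAt 0 hL
    simpa using this
  -- derivative of the explicit function at 0 is 0
  have h2 : HasDerivAt (fun t : ℝ => g (dotR z z + t ^ 2 * (ξ₅ ^ 2 + ξ₆ ^ 2)) * C) 0 0 := by
    have hu : HasDerivAt (fun t : ℝ => dotR z z + t ^ 2 * (ξ₅ ^ 2 + ξ₆ ^ 2)) 0 0 := by
      simpa using ((hasDerivAt_pow 2 (0 : ℝ)).mul_const (ξ₅ ^ 2 + ξ₆ ^ 2)).const_add (dotR z z)
    have := (((hg _).hasDerivAt.comp 0 hu).mul_const C)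
    simpa using this
  rw [key] at h1
  exact h1.unique h2
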